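/- arXiv:1503.05431 — 2 statements merged into one kernel-verified Lean document; each statement's English description precedes it below -/
import Mathlib

section
/- Let v* = ‖v*‖ p₁ ⊗ ⋯ ⊗ p_d be a best rank-one approximation of b with all ‖p_μ‖ = 1, and let μ ≠ ν. Let M be the matrix in L(ℝ^{n_ν}, ℝ^{n_μ}) defined by ⟨M g_ν, g_μ⟩ = ⟨p₁⊗⋯⊗g_ν⊗⋯⊗g_μ⊗⋯⊗p_d, b⟩ (contracting b against the fixed p_ξ for ξ ∉ {μ,ν}). Then ‖v*‖ is the largest singular value of M, with p_ν, p_μ as associated singular vectors. -/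
open scoped BigOperators

/-- Rank-one tensor in `⊗_{μ} ℝ^{n μ}`, modeled as `EuclideanSpace ℝ (Π μ, Fin (n μ))`. -/
noncomputable def rankOne {d : ℕ} (n : Fin d → ℕ)
    (p : ∀ μ, EuclideanSpace ℝ (Fin (n μ))) :
    EuclideanSpace ℝ (∀ μ, Fin (n μ)) :=
  WithLp.toLp 2 (fun i : (∀ μ, Fin (n μ)) => ∏ μ, p μ (i μ))

/-- The objective function `f(v) = (1/‖b‖²)(½⟨v,v⟩ − ⟨b,v⟩)`. -/
noncomputable def fobj {ι : Type*} [Fintype ι] (b v : EuclideanSpace ℝ ι) : ℝ :=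
  (1 / ‖b‖ ^ 2) * ((1 / 2) * (inner ℝ v v : ℝ) - (inner ℝ b v : ℝ))


/-- The rank-one tensor `V̄(g_ν, g_μ)` obtained from fixed vectors `p` by replacing the
`ν`-th and `μ`-th components by `g_ν` and `g_μ`. -/
noncomputable def Vbar {d : ℕ} (n : Fin d → ℕ)
    (p : ∀ ξ, EuclideanSpace ℝ (Fin (n ξ))) (ν μ : Fin d)
    (gν : EuclideanSpace ℝ (Fin (n ν))) (gμ : EuclideanSpace ℝ (Fin (n μ))) :
    EuclideanSpace ℝ (∀ ξ, Fin (n ξ)) :=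
  rankOne n (Function.update (Function.update p ν gν) μ gμ)

section aux
variable {d : ℕ} {n : Fin d → ℕ}

lemma inner_rankOne (q r : ∀ μ, EuclideanSpace ℝ (Fin (n μ))) :
    (inner ℝ (rankOne n q) (rankOne n r) : ℝ) = ∏ μ, (inner ℝ (q μ) (r μ) : ℝ) := by
  simp only [rankOne, PiLp.inner_apply, RCLike.inner_apply, conj_trivial]
  rw [Finset.prod_univ_sum]
  exact Finset.sum_congr rfl fun i _ => (Finset.prod_mul_distrib).symm

lemma norm_rankOne_unit {q : ∀ μ, EuclideanSpace ℝ (Fin (n μ))} (hq : ∀ ξ, ‖q ξ‖ = 1) :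
    ‖rankOne n q‖ = 1 := by
  have h2 : ‖rankOne n q‖ ^ 2 = 1 := by
    rw [← real_inner_self_eq_norm_sq, inner_rankOne]
    exact Finset.prod_eq_one fun ξ _ => by rw [real_inner_self_eq_norm_sq, hq, one_pow]
  nlinarith [norm_nonneg (rankOne n q)]

lemma rankOne_update_apply (p : ∀ ξ, EuclideanSpace ℝ (Fin (n ξ))) (τ : Fin d)
    (g : EuclideanSpace ℝ (Fin (n τ))) (i : ∀ ξ, Fin (n ξ)) :
    rankOne n (Function.update p τ g) i = g (i τ) * ∏ ξ ∈ {τ}ᶜ, p ξ (i ξ) := by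
  rw [show rankOne n (Function.update p τ g) i
      = ∏ ξ, (Function.update p τ g ξ) (i ξ) from rfl,
    Fintype.prod_eq_mul_prod_compl τ]
  congr 1
  · rw [Function.update_self]
  · exact Finset.prod_congr rfl fun ξ hξ => by
      rw [Function.update_of_ne (by simpa using hξ)]

lemma inner_rankOne_update (p : ∀ ξ, EuclideanSpace ℝ (Fin (n ξ))) (hp : ∀ ξ, ‖p ξ‖ = 1)
    (τ : Fin d) (g : EuclideanSpace ℝ (Fin (n τ))) :
    (inner ℝ (rankOne n p) (rankOne n (Function.update p τ g)) : ℝ) = (inner ℝ (p τ) g : ℝ) := by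
  rw [inner_rankOne, Fintype.prod_eq_mul_prod_compl τ, Function.update_self]
  rw [Finset.prod_congr rfl (fun ξ hξ => by
    rw [Function.update_of_ne (by simpa using hξ), real_inner_self_eq_norm_sq, hp ξ, one_pow])]
  simp

lemma update_comb (p : ∀ ξ, EuclideanSpace ℝ (Fin (n ξ))) (τ : Fin d)
    (g : EuclideanSpace ℝ (Fin (n τ))) (a t : ℝ) :
    rankOne n (Function.update p τ (a • p τ + t • g))
      = a • rankOne n p + t • rankOne n (Function.update p τ g) := by
  ext i
  have h1 : rankOne n p i = p τ (i τ) * ∏ ξ ∈ {τ}ᶜ, p ξ (i ξ) := by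
    rw [show rankOne n p i = ∏ ξ, p ξ (i ξ) from rfl, Fintype.prod_eq_mul_prod_compl τ]
  have h2 : (a • rankOne n p + t • rankOne n (Function.update p τ g)) i
      = a * rankOne n p i + t * rankOne n (Function.update p τ g) i := rfl
  rw [h2, rankOne_update_apply, rankOne_update_apply, h1]
  have h3 : (a • p τ + t • g) (i τ) = a * p τ (i τ) + t * g (i τ) := rfl
  rw [h3]; ring

end aux

/-- If `v* = ‖v*‖ p₁ ⊗ ⋯ ⊗ p_d` is a best rank-one approximation of `b`, then `‖v*‖` is
the largest singular value of the contracted matrix `M`, with `p_ν, p_μ` as associated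
singular vectors. -/
theorem stmt5 {d : ℕ} (n : Fin d → ℕ)
    (b : EuclideanSpace ℝ (∀ ξ, Fin (n ξ)))
    (p : ∀ ξ, EuclideanSpace ℝ (Fin (n ξ))) (hp : ∀ ξ, ‖p ξ‖ = 1)
    (ν μ : Fin d) (hνμ : ν ≠ μ)
    (v : EuclideanSpace ℝ (∀ ξ, Fin (n ξ)))
    (hv : v = ‖v‖ • rankOne n p)
    (hbest : ∀ (c : ℝ) (q : ∀ ξ, EuclideanSpace ℝ (Fin (n ξ))),
      ‖b - v‖ ≤ ‖b - c • rankOne n q‖)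
    (M : EuclideanSpace ℝ (Fin (n ν)) →ₗ[ℝ] EuclideanSpace ℝ (Fin (n μ)))
    (hM : ∀ (gν : EuclideanSpace ℝ (Fin (n ν))) (gμ : EuclideanSpace ℝ (Fin (n μ))),
      (inner ℝ (M gν) gμ : ℝ) = (inner ℝ (Vbar n p ν μ gν gμ) b : ℝ)) :
    M (p ν) = ‖v‖ • p μ ∧
      (LinearMap.adjoint M) (p μ) = ‖v‖ • p ν ∧
      ∀ (σ : ℝ) (qν : EuclideanSpace ℝ (Fin (n ν))) (qμ : EuclideanSpace ℝ (Fin (n μ))),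
        ‖qν‖ = 1 → ‖qμ‖ = 1 → M qν = σ • qμ → (LinearMap.adjoint M) qμ = σ • qν →
        σ ≤ ‖v‖ := by
  have he : ‖rankOne n p‖ = 1 := norm_rankOne_unit hp
  -- first-order optimality in each slot
  have key : ∀ (τ : Fin d) (g : EuclideanSpace ℝ (Fin (n τ))),
      (inner ℝ b (rankOne n (Function.update p τ g)) : ℝ) = ‖v‖ * (inner ℝ (p τ) g : ℝ) := by
    intro τ g
    set w := rankOne n (Function.update p τ g) with hw
    have horth : (inner ℝ (b - v) w : ℝ) = 0 := by
      set a := (inner ℝ (b - v) w : ℝ) with ha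
      have hC : (0:ℝ) ≤ ‖w‖ ^ 2 := sq_nonneg _
      have hineq : ∀ t : ℝ, 0 ≤ -(2*t*a) + t^2 * ‖w‖^2 := by
        intro t
        have h := hbest 1 (Function.update p τ (‖v‖ • p τ + t • g))
        rw [one_smul, update_comb, ← hv, sub_add_eq_sub_sub] at h
        have h3 := pow_le_pow_left₀ (norm_nonneg _) h 2
        rw [← hw] at h3
        rw [norm_sub_sq_real (b - v) (t • w), real_inner_smul_right, ← ha, norm_smul,
          Real.norm_eq_abs] at h3
        nlinarith [sq_abs t]
      set t₀ : ℝ := a / (‖w‖^2 + 1) with ht₀def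
      have h1 := hineq t₀
      have hpos : (0:ℝ) < ‖w‖^2 + 1 := by linarith
      have ht₀ : t₀ * (‖w‖^2 + 1) = a := div_mul_cancel₀ a (ne_of_gt hpos)
      have ha2 : 2 * t₀ * a = 2 * t₀^2 * (‖w‖^2 + 1) := by rw [← ht₀]; ring
      have ht2 : t₀^2 * (‖w‖^2 + 2) ≤ 0 := by nlinarith [h1, ha2]
      have h0 : t₀^2 = 0 := le_antisymm (by nlinarith [ht2, hC]) (sq_nonneg t₀)
      have ht00 : t₀ = 0 := by
        have := sq_eq_zero_iff.mp h0
        exact this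
      rw [← ht₀, ht00, zero_mul]
    have hbw : (inner ℝ b w : ℝ) = (inner ℝ v w : ℝ) := by
      rw [inner_sub_left] at horth; linarith
    rw [hbw]
    conv_lhs => rw [hv]
    rw [real_inner_smul_left, hw, inner_rankOne_update p hp τ g]
  -- bound: every unit rank-one has inner product with b at most ‖v‖
  have hs1 : (inner ℝ b (rankOne n p) : ℝ) = ‖v‖ := by
    have h := hbest (inner ℝ b (rankOne n p) : ℝ) p
    have h3 := pow_le_pow_left₀ (norm_nonneg _) h 2
    nth_rewrite 1 [hv] at h3
    rw [norm_sub_sq_real, norm_sub_sq_real, real_inner_smul_right, real_inner_smul_right,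
      norm_smul, norm_smul, he, Real.norm_eq_abs, Real.norm_eq_abs] at h3
    set s := (inner ℝ b (rankOne n p) : ℝ)
    have h5 : |‖v‖| = ‖v‖ := abs_norm v
    have h6 : (s - ‖v‖)^2 ≤ 0 := by nlinarith [sq_abs s, sq_abs ‖v‖]
    have h7 : s - ‖v‖ = 0 := sq_eq_zero_iff.mp (le_antisymm h6 (sq_nonneg _))
    linarith
  have hbound : ∀ q : ∀ ξ, EuclideanSpace ℝ (Fin (n ξ)), (∀ ξ, ‖q ξ‖ = 1) →
      (inner ℝ b (rankOne n q) : ℝ) ≤ ‖v‖ := by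
    intro q hq
    have hu : ‖rankOne n q‖ = 1 := norm_rankOne_unit hq
    set c := (inner ℝ b (rankOne n q) : ℝ) with hc
    have h := hbest c q
    have h3 := pow_le_pow_left₀ (norm_nonneg _) h 2
    nth_rewrite 1 [hv] at h3
    rw [norm_sub_sq_real, norm_sub_sq_real, real_inner_smul_right, real_inner_smul_right,
      norm_smul, norm_smul, he, hu, hs1, ← hc, Real.norm_eq_abs, Real.norm_eq_abs] at h3
    have h5 : |‖v‖| = ‖v‖ := abs_norm v
    nlinarith [sq_abs c, sq_abs ‖v‖, norm_nonneg v, sq_nonneg (c - ‖v‖), sq_nonneg (c + ‖v‖)]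
  refine ⟨?_, ?_, ?_⟩
  · apply ext_inner_right ℝ
    intro g
    rw [hM (p ν) g, real_inner_smul_left]
    have hV : Vbar n p ν μ (p ν) g = rankOne n (Function.update p μ g) := by
      rw [Vbar, Function.update_eq_self]
    rw [hV, real_inner_comm, key μ g]
  · apply ext_inner_right ℝ
    intro g
    rw [LinearMap.adjoint_inner_left, real_inner_comm, hM g (p μ),
      real_inner_smul_left]
    have hV : Vbar n p ν μ g (p μ) = rankOne n (Function.update p ν g) := by
      rw [Vbar, show p μ = (Function.update p ν g) μ from
        (Function.update_of_ne (Ne.symm hνμ) _ _).symm, Function.update_eq_self]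
    rw [hV, real_inner_comm, key ν g]
  · intro σ qν qμ hqν hqμ hMq _
    have hσ : σ = (inner ℝ b (rankOne n (Function.update (Function.update p ν qν) μ qμ)) : ℝ) := by
      have h := hM qν qμ
      rw [hMq, real_inner_smul_left, real_inner_self_eq_norm_sq, hqμ] at h
      rw [Vbar] at h
      rw [real_inner_comm]
      simpa using h
    rw [hσ]
    apply hbound
    intro ξ
    by_cases hξμ : ξ = μ
    · subst hξμ; rw [Function.update_self]; exact hqμ
    · rw [Function.update_of_ne hξμ]
      by_cases hξν : ξ = ν
      · subst hξν; rw [Function.update_self]; exact hqν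
      · rw [Function.update_of_ne hξν]; exact hp ξ
end

section
/- For the orthogonally decomposable tensor b = Σ_{j=1}^2 λ_j ⊗_{μ=1}^d b_{jμ} with λ₁ > λ₂ > 0, d ≥ 3, and initial guesses parametrized modewise by p_μ(φ_μ) = sin(φ_μ) b_{2μ} + cos(φ_μ) b_{1μ}, φ_μ ∈ [0, π/2], the dominance condition of the global-minimum term b₁ at the initial guess holds for all μ if and only if tan(φ_μ) < (λ₁/λ₂)^{1/(d−2)} for all μ. The threshold angle φ*_{d} = arctan((λ₁/λ₂)^{1/(d−2)}) satisfies φ*_d > π/4 and φ*_d → π/4 as d → ∞. -/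
open scoped BigOperators
open Filter Topology Real

/-- For `b = λ₁ ⊗_μ b_{1μ} + λ₂ ⊗_μ b_{2μ}` of order `d+3` with orthonormal `{b_{1μ}, b_{2μ}}`
and `λ₁ > λ₂ > 0`, and initial guesses `p_μ(φ_μ) = sin(φ_μ) b_{2μ} + cos(φ_μ) b_{1μ}`
with `φ_μ ∈ [0, π/2)`: the dominance of the global-minimum term `b₁` holds for all `μ`
iff `tan(φ_μ) < (λ₁/λ₂)^{1/(d+1)}` for all `μ`; the threshold angle
`φ* = arctan((λ₁/λ₂)^{1/(d+1)})` satisfies `φ* > π/4`, and `φ* → π/4` as the order tends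
to infinity. -/
theorem stmt17 {d : ℕ} (n : Fin (d + 3) → ℕ)
    (lam₁ lam₂ : ℝ) (hlam₂ : 0 < lam₂) (hlam : lam₂ < lam₁)
    (b₁ b₂ : ∀ μ, EuclideanSpace ℝ (Fin (n μ)))
    (hb₁ : ∀ μ, ‖b₁ μ‖ = 1) (hb₂ : ∀ μ, ‖b₂ μ‖ = 1)
    (horth : ∀ μ, (inner ℝ (b₁ μ) (b₂ μ) : ℝ) = 0)
    (φ : Fin (d + 3) → ℝ) (hφ : ∀ μ, φ μ ∈ Set.Ico 0 (π / 2))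
    (p : ∀ μ, EuclideanSpace ℝ (Fin (n μ)))
    (hp : ∀ μ, p μ = Real.sin (φ μ) • b₂ μ + Real.cos (φ μ) • b₁ μ) :
    ((∀ μ, lam₂ ^ ((2 : ℝ) / ((d : ℝ) + 1)) * (inner ℝ (b₂ μ) (p μ) : ℝ) ^ 2
          < lam₁ ^ ((2 : ℝ) / ((d : ℝ) + 1)) * (inner ℝ (b₁ μ) (p μ) : ℝ) ^ 2) ↔
        (∀ μ, Real.tan (φ μ) < (lam₁ / lam₂) ^ ((1 : ℝ) / ((d : ℝ) + 1)))) ∧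
      π / 4 < Real.arctan ((lam₁ / lam₂) ^ ((1 : ℝ) / ((d : ℝ) + 1))) ∧
      Tendsto (fun m : ℕ => Real.arctan ((lam₁ / lam₂) ^ ((1 : ℝ) / ((m : ℝ) - 2))))
        atTop (𝓝 (π / 4)) := by
  have hL : (0:ℝ) < lam₁ / lam₂ := div_pos (hlam₂.trans hlam) hlam₂
  have hL1 : (1:ℝ) < lam₁ / lam₂ := (one_lt_div hlam₂).mpr hlam
  set a : ℝ := (2 : ℝ) / ((d : ℝ) + 1) with ha
  set r : ℝ := (lam₁ / lam₂) ^ ((1 : ℝ) / ((d : ℝ) + 1)) with hrdef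
  have hdpos : (0:ℝ) < (d : ℝ) + 1 := by positivity
  have hr0 : 0 < r := Real.rpow_pos_of_pos hL _
  have hr1 : 1 < r :=
    Real.one_lt_rpow_iff_of_pos hL |>.mpr (Or.inl ⟨hL1, by positivity⟩)
  have hK : lam₁ ^ a = lam₂ ^ a * r ^ 2 := by
    have h1 : r ^ 2 = (lam₁ / lam₂) ^ a := by
      rw [hrdef, ← Real.rpow_natCast (_ ^ _) 2, ← Real.rpow_mul hL.le]
      congr 1
      ring
    rw [h1, Real.div_rpow (hlam₂.trans hlam).le hlam₂.le]
    field_simp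
  refine ⟨forall_congr' fun μ => ?_, ?_, ?_⟩
  · have hφμ := hφ μ
    have hs : 0 ≤ Real.sin (φ μ) :=
      Real.sin_nonneg_of_nonneg_of_le_pi hφμ.1 (hφμ.2.le.trans (by linarith [Real.pi_pos]))
    have hc : 0 < Real.cos (φ μ) :=
      Real.cos_pos_of_mem_Ioo ⟨by linarith [hφμ.1, Real.pi_pos], hφμ.2⟩
    have h2 : (inner ℝ (b₂ μ) (p μ) : ℝ) = Real.sin (φ μ) := by
      rw [hp, inner_add_right, real_inner_smul_right, real_inner_smul_right,
        real_inner_self_eq_norm_sq, hb₂ μ,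
        show (inner ℝ (b₂ μ) (b₁ μ) : ℝ) = 0 from (real_inner_comm _ _).trans (horth μ)]
      ring
    have h1 : (inner ℝ (b₁ μ) (p μ) : ℝ) = Real.cos (φ μ) := by
      rw [hp, inner_add_right, real_inner_smul_right, real_inner_smul_right,
        horth μ, real_inner_self_eq_norm_sq, hb₁ μ]
      ring
    have hpow : 0 < lam₂ ^ a := Real.rpow_pos_of_pos hlam₂ _
    rw [h1, h2, hK, Real.tan_eq_sin_div_cos, div_lt_iff₀ hc, mul_assoc,
      mul_lt_mul_iff_right₀ hpow, ← mul_pow]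
    exact pow_lt_pow_iff_left₀ hs (mul_pos hr0 hc).le two_ne_zero
  · calc π / 4 = Real.arctan 1 := Real.arctan_one.symm
      _ < Real.arctan r := Real.arctan_strictMono hr1
  · have h0 : Tendsto (fun m : ℕ => (1 : ℝ) / ((m : ℝ) - 2)) atTop (𝓝 0) := by
      simpa [one_div, Function.comp_def, sub_eq_add_neg] using
        (tendsto_inv_atTop_zero.comp
          (tendsto_atTop_add_const_right atTop (-2 : ℝ) tendsto_natCast_atTop_atTop))
    have h1 : Tendsto (fun m : ℕ => (lam₁ / lam₂) ^ ((1 : ℝ) / ((m : ℝ) - 2)))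
        atTop (𝓝 1) := by
      have := (Real.continuousAt_const_rpow (a := lam₁ / lam₂) (b := 0) hL.ne').tendsto.comp h0
      simpa [Real.rpow_zero, Function.comp_def] using this
    have := (Real.continuous_arctan.tendsto 1).comp h1
    simpa [Real.arctan_one, Function.comp_def] using this
end
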